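/- For every ν > 0 and every x > 0, the scaled Macdonald function ρ_ν is the Riemann–Liouville right-sided fractional integral of order ν of ρ_0: ρ_ν(x) = (1/Γ(ν)) ∫_x^∞ (t − x)^{ν−1} ρ_0(t) dt. -/

import Mathlib

open MeasureTheory Real Set Function

lemma expneg_le (y : ℝ) (hy : 0 < y) : Real.exp (-y) ≤ y⁻¹ := by
  rw [Real.exp_neg]
  exact inv_anti₀ hy (by linarith [Real.add_one_le_exp y])

/-- Integrability of the rho integrand. -/
lemma intA {ν x : ℝ} (hν : -2 < ν) (hx : 0 < x) :
    IntegrableOn (fun s => s ^ ν * Real.exp (-s - x / s)) (Ioi (0:ℝ)) := by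
  have hg : IntegrableOn (fun s : ℝ => x⁻¹ * (Real.exp (-s) * s ^ (ν + 2 - 1))) (Ioi 0) :=
    (Real.GammaIntegral_convergent (by linarith : (0:ℝ) < ν + 2)).const_mul _
  refine hg.mono' ?_ ?_
  · exact (Measurable.aestronglyMeasurable (by fun_prop))
  · filter_upwards [ae_restrict_mem measurableSet_Ioi] with s hs
    have hs0 : (0:ℝ) < s := hs
    have h1 : Real.exp (-(x / s)) ≤ (x / s)⁻¹ := expneg_le _ (by positivity)
    have hrw : s ^ ν * Real.exp (-s - x / s)
        = (s ^ ν * Real.exp (-(x/s))) * Real.exp (-s) := by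
      rw [show -s - x/s = -(x/s) + -s by ring, Real.exp_add]; ring
    rw [Real.norm_eq_abs, abs_of_nonneg (by positivity), hrw]
    have h2 : s ^ ν * Real.exp (-(x/s)) ≤ s ^ ν * (x/s)⁻¹ :=
      mul_le_mul_of_nonneg_left h1 (by positivity)
    calc s ^ ν * Real.exp (-(x/s)) * Real.exp (-s)
        ≤ s ^ ν * (x/s)⁻¹ * Real.exp (-s) :=
          mul_le_mul_of_nonneg_right h2 (Real.exp_pos _).le
      _ = x⁻¹ * (Real.exp (-s) * s ^ (ν + 2 - 1)) := by
          rw [show ν + 2 - 1 = ν + 1 by ring, Real.rpow_add_one hs0.ne']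
          field_simp

/-- Integrability of the shifted Gamma integrand. -/
lemma intB {ν s x : ℝ} (hν : 0 < ν) (hs : 0 < s) :
    IntegrableOn (fun t => (t - x) ^ (ν - 1) * Real.exp (-(t / s))) (Ioi x) := by
  have key : IntegrableOn (fun t : ℝ => t ^ (ν - 1) * Real.exp (-(s⁻¹ * t))) (Ioi 0) := by
    have := integrableOn_rpow_mul_exp_neg_mul_rpow (by linarith : (-1:ℝ) < ν - 1)
      (show (0:ℝ) < 1 by norm_num) (show (0:ℝ) < s⁻¹ by positivity)
    simpa [Real.rpow_one] using this
  have h2 : IntegrableOn (fun t : ℝ => t ^ (ν - 1) * Real.exp (-((t + x) / s))) (Ioi 0) := by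
    have : (fun t : ℝ => t ^ (ν - 1) * Real.exp (-((t + x) / s)))
        = fun t => (t ^ (ν - 1) * Real.exp (-(s⁻¹ * t))) * Real.exp (-(x/s)) := by
      funext t
      rw [show -((t + x)/s) = -(s⁻¹ * t) + -(x/s) by field_simp; ring, Real.exp_add]; ring
    rw [this]
    exact key.mul_const _
  have := (measurePreserving_add_right volume x).integrableOn_comp_preimage
    (measurableEmbedding_addRight x) (f := fun t => (t - x) ^ (ν - 1) * Real.exp (-(t / s)))
    (s := Ioi x)
  rw [← this]
  simpa [Function.comp_def, add_sub_cancel_right] using h2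

/-- The shifted Gamma integral. -/
lemma eqB {ν s x : ℝ} (hν : 0 < ν) (hs : 0 < s) :
    ∫ t in Ioi x, (t - x) ^ (ν - 1) * Real.exp (-(t / s))
      = s ^ ν * Real.Gamma ν * Real.exp (-(x / s)) := by
  rw [← (measurePreserving_add_right volume x).setIntegral_preimage_emb
    (measurableEmbedding_addRight x) (fun t => (t - x) ^ (ν - 1) * Real.exp (-(t / s)))]
  have h1 : (fun t : ℝ => (t + x - x) ^ (ν - 1) * Real.exp (-((t + x) / s)))
      = fun t => (t ^ (ν - 1) * Real.exp (-(s⁻¹ * t))) * Real.exp (-(x/s)) := by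
    funext t
    rw [show -((t + x)/s) = -(s⁻¹ * t) + -(x/s) by field_simp; ring, Real.exp_add]
    ring_nf
  have h2 : (fun t : ℝ => (t + x)) ⁻¹' (Ioi x) = Ioi 0 := by
    ext t; simp
  simp only [h2, h1]
  rw [MeasureTheory.integral_mul_const, integral_rpow_mul_exp_neg_mul_Ioi hν (by positivity),
    one_div, inv_inv]

/-- The scaled Macdonald function `ρ_ν(x) = ∫₀^∞ t^(ν-1) e^(-t - x/t) dt`. -/
noncomputable def rho (ν : ℝ) (x : ℝ) : ℝ :=
  ∫ t in Ioi (0:ℝ), t ^ (ν - 1) * Real.exp (-t - x / t)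

theorem rho_eq_fractional_integral (ν : ℝ) (hν : 0 < ν) (x : ℝ) (hx : 0 < x) :
    rho ν x = (1 / Real.Gamma ν) * ∫ t in Ioi x, (t - x) ^ (ν - 1) * rho 0 t := by
  have hG : 0 < Real.Gamma ν := Real.Gamma_pos_of_pos hν
  set F : ℝ → ℝ → ℝ := fun s t => (t - x) ^ (ν - 1) * (s⁻¹ * Real.exp (-s - t / s)) with hF
  -- inner computation: for s > 0, ∫ t in Ioi x, F s t = Γ ν * (s^(ν-1) * exp(-s-x/s))
  have hF_fac : ∀ s : ℝ, F s = fun t =>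
      ((t - x) ^ (ν - 1) * Real.exp (-(t / s))) * (s⁻¹ * Real.exp (-s)) := by
    intro s; funext t
    simp only [hF, show -s - t/s = -(t/s) + -s by ring, Real.exp_add]; ring
  have hinner : ∀ s ∈ Ioi (0:ℝ), ∫ t in Ioi x, F s t
      = Real.Gamma ν * (s ^ (ν - 1) * Real.exp (-s - x / s)) := by
    intro s hs
    have hs0 : (0:ℝ) < s := hs
    rw [hF_fac s, MeasureTheory.integral_mul_const, eqB hν hs0]
    rw [show -s - x/s = -(x/s) + -s by ring, Real.exp_add,
      show ν - 1 = ν + (-1) by ring, Real.rpow_add hs0, Real.rpow_neg_one]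
    ring
  -- integrability on the product
  have hmeas : AEStronglyMeasurable (uncurry F)
      ((volume.restrict (Ioi (0:ℝ))).prod (volume.restrict (Ioi x))) :=
    Measurable.aestronglyMeasurable (by unfold F; fun_prop)
  have hFint : Integrable (uncurry F)
      ((volume.restrict (Ioi (0:ℝ))).prod (volume.restrict (Ioi x))) := by
    rw [MeasureTheory.integrable_prod_iff hmeas]
    constructor
    · filter_upwards [ae_restrict_mem measurableSet_Ioi] with s hs
      have hs0 : (0:ℝ) < s := hs
      have : (fun y => uncurry F (s, y)) = F s := rfl
      rw [this, hF_fac s]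
      exact (intB hν hs0).mul_const _
    · refine Integrable.congr
        ((intA (by linarith : (-2:ℝ) < ν - 1) hx).const_mul (Real.Gamma ν)) ?_
      filter_upwards [ae_restrict_mem measurableSet_Ioi] with s hs
      have hs0 : (0:ℝ) < s := hs
      rw [← hinner s hs]
      refine (setIntegral_congr_fun measurableSet_Ioi fun t ht => ?_).symm
      have hxt : x < t := ht
      show ‖F s t‖ = F s t
      rw [Real.norm_eq_abs, abs_of_nonneg]
      have h1 : (0:ℝ) ≤ (t - x) ^ (ν - 1) := Real.rpow_nonneg (by linarith) _
      have h2 : (0:ℝ) < s⁻¹ := by positivity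
      simp only [hF]
      positivity
  -- now the computation
  have hswap := MeasureTheory.integral_integral_swap (f := F) hFint
  have hrho0 : ∀ t : ℝ, (t - x) ^ (ν - 1) * rho 0 t = ∫ s in Ioi (0:ℝ), F s t := by
    intro t
    rw [MeasureTheory.integral_const_mul]
    congr 1
    unfold rho
    refine setIntegral_congr_fun measurableSet_Ioi fun s hs => ?_
    rw [zero_sub, Real.rpow_neg_one]
  have hRHS : ∫ t in Ioi x, (t - x) ^ (ν - 1) * rho 0 t = Real.Gamma ν * rho ν x := by
    calc ∫ t in Ioi x, (t - x) ^ (ν - 1) * rho 0 t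
        = ∫ t in Ioi x, ∫ s in Ioi (0:ℝ), F s t := by
          exact setIntegral_congr_fun measurableSet_Ioi fun t _ => hrho0 t
      _ = ∫ s in Ioi (0:ℝ), ∫ t in Ioi x, F s t := hswap.symm
      _ = ∫ s in Ioi (0:ℝ), Real.Gamma ν * (s ^ (ν - 1) * Real.exp (-s - x / s)) :=
          setIntegral_congr_fun measurableSet_Ioi fun s hs => hinner s hs
      _ = Real.Gamma ν * rho ν x := by rw [MeasureTheory.integral_const_mul]; rfl
  rw [hRHS]
  field_simp
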